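/- arXiv:1409.7095 — 2 statements merged into one kernel-verified Lean document; each statement's English description precedes it below -/
import Mathlib

section
/- Suppose φ(ω, x) is a family of functions smooth in ω with ∂_ω φ = L₊^{-1}[(2ω + βW)φ] in the sense that L₊[∂_ω φ] = (2ω + βW)φ, where L₊ is self-adjoint. Then ⟨L₊^{-1}[(2ω+βW)φ], (2ω+βW)φ⟩ = ⟨∂_ω φ, (2ω+βW)φ⟩ = (1/2)∂_ω[∫(2ω + βW(x))φ²(x)dx] - ∫φ²(x)dx. -/
open MeasureTheory

theorem VK_identity (d : ℕ) (hd : 1 ≤ d) (β ω : ℝ)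
    (W : EuclideanSpace ℝ (Fin d) → ℝ) (hW : ∃ C, ∀ x, |W x| ≤ C)
    (φ : ℝ → EuclideanSpace ℝ (Fin d) → ℝ)
    (ψ : EuclideanSpace ℝ (Fin d) → ℝ)
    (hψ : ∀ x, HasDerivAt (fun ω' => φ ω' x) (ψ x) ω)
    (g : EuclideanSpace ℝ (Fin d) → ℝ)
    (hg : ∀ x, HasDerivAt (fun ω' => (2 * ω' + β * W x) * (φ ω' x) ^ 2) (g x) ω)
    (hswap : HasDerivAt (fun ω' => ∫ x, (2 * ω' + β * W x) * (φ ω' x) ^ 2 ∂volume)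
      (∫ x, g x ∂volume) ω)
    (hint1 : Integrable (fun x => (φ ω x) ^ 2) volume)
    (hint2 : Integrable (fun x => ψ x * ((2 * ω + β * W x) * φ ω x)) volume)
    (hint3 : Integrable g volume) :
    ∫ x, ψ x * ((2 * ω + β * W x) * φ ω x) ∂volume
      = (1 / 2) * (∫ x, g x ∂volume) - ∫ x, (φ ω x) ^ 2 ∂volume := by
  have hgval : ∀ x, g x = 2 * (φ ω x) ^ 2 + 2 * (ψ x * ((2 * ω + β * W x) * φ ω x)) := by
    intro x
    have h1 : HasDerivAt (fun ω' => (2 * ω' + β * W x) * (φ ω' x) ^ 2)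
        (2 * (φ ω x) ^ 2 + (2 * ω + β * W x) * (2 * φ ω x * ψ x)) ω := by
      have ha : HasDerivAt (fun ω' : ℝ => 2 * ω' + β * W x) 2 ω := by
        simpa using ((hasDerivAt_id ω).const_mul 2).add_const (β * W x)
      have hb : HasDerivAt (fun ω' => (φ ω' x) ^ 2) (2 * φ ω x * ψ x) ω := by
        simpa [mul_comm, mul_assoc, Pi.pow_def] using (hψ x).pow 2
      simpa [Pi.mul_def] using ha.mul hb
    have := (hg x).unique h1
    rw [this]; ring
  have hrw : (∫ x, g x ∂volume)
      = 2 * (∫ x, (φ ω x) ^ 2 ∂volume) + 2 * ∫ x, ψ x * ((2 * ω + β * W x) * φ ω x) ∂volume := by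
    calc (∫ x, g x ∂volume)
        = ∫ x, (2 * (φ ω x) ^ 2 + 2 * (ψ x * ((2 * ω + β * W x) * φ ω x))) ∂volume := by
          exact integral_congr_ae (Filter.Eventually.of_forall hgval)
      _ = (∫ x, 2 * (φ ω x) ^ 2 ∂volume) + ∫ x, 2 * (ψ x * ((2 * ω + β * W x) * φ ω x)) ∂volume :=
          integral_add (hint1.const_mul 2) (hint2.const_mul 2)
      _ = 2 * (∫ x, (φ ω x) ^ 2 ∂volume) + 2 * ∫ x, ψ x * ((2 * ω + β * W x) * φ ω x) ∂volume := by
          rw [MeasureTheory.integral_const_mul, MeasureTheory.integral_const_mul]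
  rw [hrw]; ring
end

section
/- For the scaled soliton family with W = 1: define μ(ω) = 1 - ω² - βω and I(ω) = (2ω+β)μ(ω)^{c} with c = 2/(p-1) - d/2 > 0. Then I is strictly increasing at ω iff 2μ(ω) > c(2ω+β)², and the stationary points of I in the existence interval are exactly ω = -β/2 ± (1/2)√((β²+4)/(2c+1)). -/
theorem VK_monotonicity_and_stationary_points (d : ℕ) (hd : 1 ≤ d) (p β : ℝ)
    (hp : 1 < p) (hp' : p < 1 + 4 / (d : ℝ)) (c : ℝ)
    (hc : c = 2 / (p - 1) - (d : ℝ) / 2) (hcpos : 0 < c) (ω : ℝ)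
    (hω : ω ∈ Set.Ioo ((-β - Real.sqrt (β ^ 2 + 4)) / 2) ((-β + Real.sqrt (β ^ 2 + 4)) / 2)) :
    (0 < deriv (fun ω' : ℝ => (2 * ω' + β) * (1 - ω' ^ 2 - β * ω') ^ c) ω ↔
      c * (2 * ω + β) ^ 2 < 2 * (1 - ω ^ 2 - β * ω)) ∧
    (deriv (fun ω' : ℝ => (2 * ω' + β) * (1 - ω' ^ 2 - β * ω') ^ c) ω = 0 ↔
      (ω = -β / 2 - (1 / 2) * Real.sqrt ((β ^ 2 + 4) / (2 * c + 1)) ∨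
       ω = -β / 2 + (1 / 2) * Real.sqrt ((β ^ 2 + 4) / (2 * c + 1)))) := by
  obtain ⟨hω1, hω2⟩ := hω
  have hs2 : (Real.sqrt (β ^ 2 + 4)) ^ 2 = β ^ 2 + 4 :=
    Real.sq_sqrt (by positivity)
  -- positivity of μ
  have hμ : 0 < 1 - ω ^ 2 - β * ω := by nlinarith [hω1, hω2, hs2]
  -- derivative of inner function
  have h1 : HasDerivAt (fun ω' : ℝ => 1 - ω' ^ 2 - β * ω') (-(2 * ω) - β) ω := by
    have := (((hasDerivAt_const ω (1 : ℝ)).sub (hasDerivAt_pow 2 ω)).sub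
      ((hasDerivAt_id ω).const_mul β))
    convert this using 1
    · rfl
    · rfl
    · funext x; simp
    · simp
  have h2 : HasDerivAt (fun ω' : ℝ => (1 - ω' ^ 2 - β * ω') ^ c)
      ((-(2 * ω) - β) * c * (1 - ω ^ 2 - β * ω) ^ (c - 1)) ω :=
    h1.rpow_const (Or.inl hμ.ne')
  have h3 : HasDerivAt (fun ω' : ℝ => 2 * ω' + β) 2 ω := by
    simpa using ((hasDerivAt_id ω).const_mul 2).add_const β
  have hf := h3.mul h2
  have hμc : (1 - ω ^ 2 - β * ω) ^ c
      = (1 - ω ^ 2 - β * ω) ^ (c - 1) * (1 - ω ^ 2 - β * ω) := by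
    rw [← Real.rpow_add_one hμ.ne']
    norm_num
  have key : deriv (fun ω' : ℝ => (2 * ω' + β) * (1 - ω' ^ 2 - β * ω') ^ c) ω
      = (1 - ω ^ 2 - β * ω) ^ (c - 1)
        * (2 * (1 - ω ^ 2 - β * ω) - c * (2 * ω + β) ^ 2) := by
    rw [show (fun ω' : ℝ => (2 * ω' + β) * (1 - ω' ^ 2 - β * ω') ^ c) = ((fun ω' : ℝ => 2 * ω' + β) * fun ω' => (1 - ω' ^ 2 - β * ω') ^ c) from rfl, hf.deriv, hμc]; ring
  have hApos : 0 < (1 - ω ^ 2 - β * ω) ^ (c - 1) := Real.rpow_pos_of_pos hμ _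
  set t := Real.sqrt ((β ^ 2 + 4) / (2 * c + 1)) with ht
  have h2c : (0 : ℝ) < 2 * c + 1 := by linarith
  have ht2 : t ^ 2 = (β ^ 2 + 4) / (2 * c + 1) := Real.sq_sqrt (by positivity)
  have ht2' : (2 * c + 1) * t ^ 2 = β ^ 2 + 4 := by
    rw [ht2]; field_simp
  constructor
  · rw [key]
    constructor
    · intro h
      nlinarith [h, hApos]
    · intro h
      exact mul_pos hApos (by linarith)
  · rw [key, mul_eq_zero]
    constructor
    · rintro (h | h)
      · exact absurd h hApos.ne'
      · have hfac : ((2 * c + 1) * ((ω + β / 2 - t / 2) * (ω + β / 2 + t / 2))) * (-2) = 0 := by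
          linear_combination h + (1 / 2) * ht2'
        rcases mul_eq_zero.mp hfac with hfac | hfac
        · rcases mul_eq_zero.mp hfac with hfac | hfac
          · exact absurd hfac h2c.ne'
          · rcases mul_eq_zero.mp hfac with hfac | hfac
            · right; linarith
            · left; linarith
        · norm_num at hfac
    · rintro (h | h) <;> (right; subst h; linear_combination (-(1 / 2)) * ht2')
end
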